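/- Let d be an odd prime and g ∈ ℂ^d a unit vector whose number of nonzero entries satisfies 2·‖g‖₀ > d. If rank(G(g)) ≠ d, then rank(G(g)) ≥ 2d. -/

import Mathlib

open Complex Finset

noncomputable section

/-- `gw d` is the primitive `d`-th root of unity `ω = exp(2πi/d)`. -/
def gw (d : ℕ) : ℂ := Complex.exp (2 * Real.pi * Complex.I / d)

/-- `modT d k l g = M^k T^ℓ g`, where `(Mg)_n = ω^n g_n` and `(Tg)_n = g_{n-1}`. -/
def modT (d : ℕ) (k l : ZMod d) (g : ZMod d → ℂ) : ZMod d → ℂ :=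
  fun n => gw d ^ (k.val * n.val) * g (n - l)

/-- `inn d x y = ⟨x,y⟩ = Σ_n x_n conj(y_n)`. -/
def inn (d : ℕ) [NeZero d] (x y : ZMod d → ℂ) : ℂ :=
  ∑ n : ZMod d, x n * (starRingEnd ℂ) (y n)

/-- The `d² × d²` Gram matrix `G(g)` with entries `|⟨M^k T^ℓ g, M^{k'} T^{ℓ'} g⟩|²`. -/
def Gmat (d : ℕ) [NeZero d] (g : ZMod d → ℂ) :
    Matrix (ZMod d × ZMod d) (ZMod d × ZMod d) ℂ :=
  fun p q =>
    ((‖inn d (modT d p.1 p.2 g) (modT d q.1 q.2 g)‖ ^ 2 : ℝ) : ℂ)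

set_option linter.unusedSectionVars false
set_option linter.unreachableTactic false
set_option linter.unusedTactic false
open Matrix

def ee (d : ℕ) : ZMod d → ℂ := fun a => gw d ^ a.val

variable {d : ℕ} [NeZero d]

lemma gw_prim : IsPrimitiveRoot (gw d) d := Complex.isPrimitiveRoot_exp d (NeZero.ne d)

lemma gw_pow_d : gw d ^ d = 1 := gw_prim.pow_eq_one

lemma gw_pow_mod (m : ℕ) : gw d ^ (m % d) = gw d ^ m := by
  conv_rhs => rw [← Nat.div_add_mod m d]
  rw [pow_add, pow_mul, gw_pow_d, one_pow, one_mul]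

lemma ee_zero : ee d 0 = 1 := by simp [ee, ZMod.val_zero]

lemma ee_add (a b : ZMod d) : ee d (a + b) = ee d a * ee d b := by
  unfold ee
  rw [← pow_add, ZMod.val_add, gw_pow_mod]

lemma ee_ne_zero (a : ZMod d) : ee d a ≠ 0 :=
  pow_ne_zero _ (gw_prim.ne_zero (NeZero.ne d))

lemma ee_eq_one_iff (a : ZMod d) : ee d a = 1 ↔ a = 0 := by
  unfold ee
  rw [gw_prim.pow_eq_one_iff_dvd]
  constructor
  · intro h
    have := Nat.eq_zero_of_dvd_of_lt h
    rcases Nat.eq_zero_or_pos a.val with h0 | hpos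
    · exact (ZMod.val_eq_zero a).mp h0
    · exact absurd (this (ZMod.val_lt a)) (by omega)
  · rintro rfl; simp [ZMod.val_zero]

lemma ee_neg_mul (a : ZMod d) : ee d (-a) * ee d a = 1 := by
  rw [← ee_add, neg_add_cancel, ee_zero]

lemma abs_gw : ‖gw d‖ = 1 := by
  have h : (2 * (Real.pi:ℂ) * I / (d:ℂ)) = ((2 * Real.pi / d : ℝ) : ℂ) * I := by
    push_cast; ring
  rw [gw, h, Complex.norm_exp_ofReal_mul_I]

lemma abs_ee (a : ZMod d) : ‖ee d a‖ = 1 := by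
  rw [ee, norm_pow, abs_gw, one_pow]

lemma conj_ee (a : ZMod d) : (starRingEnd ℂ) (ee d a) = ee d (-a) := by
  have h1 : ee d a * (starRingEnd ℂ) (ee d a) = 1 := by
    rw [Complex.mul_conj, ← Complex.sq_norm, abs_ee]; norm_num
  have h2 : ee d a * ee d (-a) = 1 := by rw [mul_comm]; exact ee_neg_mul a
  exact mul_left_cancel₀ (ee_ne_zero a) (h1.trans h2.symm)

lemma sum_ee_mul (a : ZMod d) :
    ∑ n : ZMod d, ee d (a * n) = if a = 0 then (d : ℂ) else 0 := by
  split_ifs with h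
  · subst h; simp [ee_zero, ZMod.card]
  · have key : ee d a * ∑ n : ZMod d, ee d (a * n) = ∑ n : ZMod d, ee d (a * n) := by
      rw [Finset.mul_sum]
      refine Fintype.sum_equiv (Equiv.addRight (1 : ZMod d)) _ _ (fun n => ?_)
      simp only [Equiv.coe_addRight]
      rw [← ee_add, mul_add, mul_one, add_comm]
    have h2 : (ee d a - 1) * ∑ n : ZMod d, ee d (a * n) = 0 := by
      rw [sub_mul, one_mul, key, sub_self]
    rcases mul_eq_zero.mp h2 with h3 | h3
    · exact absurd (by linear_combination h3 : ee d a = 1) (fun hh => h ((ee_eq_one_iff a).mp hh))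
    · exact h3

lemma modT_eq (g : ZMod d → ℂ) (k l n : ZMod d) :
    modT d k l g n = ee d (k * n) * g (n - l) := by
  unfold modT ee
  rw [ZMod.val_mul, gw_pow_mod]

def Af (d : ℕ) [NeZero d] (g : ZMod d → ℂ) : ZMod d × ZMod d → ℂ :=
  fun ν => inn d g (modT d ν.1 ν.2 g)

lemma Af_eq (g : ZMod d → ℂ) (ν : ZMod d × ZMod d) :
    Af d g ν = ∑ n : ZMod d, ee d (-(ν.1 * n)) * (g n * (starRingEnd ℂ) (g (n - ν.2))) := by
  unfold Af inn
  refine Finset.sum_congr rfl (fun n _ => ?_)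
  rw [modT_eq, _root_.map_mul, conj_ee]
  ring

lemma inv_sum (g : ZMod d → ℂ) (n ℓ : ZMod d) :
    ∑ k : ZMod d, ee d (k * n) * Af d g (k, ℓ) = d * (g n * (starRingEnd ℂ) (g (n - ℓ))) := by
  have : ∀ k : ZMod d, ee d (k * n) * Af d g (k, ℓ)
      = ∑ m : ZMod d, ee d (k * (n - m)) * (g m * (starRingEnd ℂ) (g (m - ℓ))) := by
    intro k
    rw [Af_eq, Finset.mul_sum]
    refine Finset.sum_congr rfl (fun m _ => ?_)
    rw [← mul_assoc, ← ee_add]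
    congr 2
    ring
  simp_rw [this]
  rw [Finset.sum_comm]
  have : ∀ m : ZMod d, ∑ k : ZMod d, ee d (k * (n - m)) * (g m * (starRingEnd ℂ) (g (m - ℓ)))
      = (if n - m = 0 then (d:ℂ) else 0) * (g m * (starRingEnd ℂ) (g (m - ℓ))) := by
    intro m
    rw [← Finset.sum_mul, ← sum_ee_mul (n - m)]
    congr 1
    exact Finset.sum_congr rfl (fun k _ => by rw [mul_comm k (n-m)])
  simp_rw [this]
  rw [Finset.sum_eq_single n]
  · simp
  · intro b _ hb
    rw [if_neg (fun h => hb (sub_eq_zero.mp h).symm), zero_mul]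
  · intro h; exact absurd (Finset.mem_univ n) h

def fC (d : ℕ) [NeZero d] (g : ZMod d → ℂ) : ZMod d × ZMod d → ℂ :=
  fun ν => Af d g ν * (starRingEnd ℂ) (Af d g ν)

lemma inn_modT (g : ZMod d → ℂ) (p q : ZMod d × ZMod d) :
    inn d (modT d p.1 p.2 g) (modT d q.1 q.2 g)
      = ee d ((p.1 - q.1) * p.2) * Af d g (q - p) := by
  have step1 : inn d (modT d p.1 p.2 g) (modT d q.1 q.2 g)
      = ∑ n : ZMod d, ee d ((p.1 - q.1) * n) * (g (n - p.2) * (starRingEnd ℂ) (g (n - q.2))) := by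
    unfold inn
    refine Finset.sum_congr rfl (fun n _ => ?_)
    rw [modT_eq, modT_eq, _root_.map_mul, conj_ee]
    have : ee d (p.1 * n) * ee d (-(q.1 * n)) = ee d ((p.1 - q.1) * n) := by
      rw [← ee_add]; congr 1; ring
    calc ee d (p.1 * n) * g (n - p.2) * (ee d (-(q.1 * n)) * (starRingEnd ℂ) (g (n - q.2)))
        = (ee d (p.1 * n) * ee d (-(q.1 * n))) * (g (n - p.2) * (starRingEnd ℂ) (g (n - q.2))) := by ring
      _ = _ := by rw [this]
  rw [step1, Af_eq, Finset.mul_sum]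
  refine Fintype.sum_equiv (Equiv.subRight p.2) _ _ (fun n => ?_)
  simp only [Equiv.subRight_apply]
  have harg1 : ee d ((p.1 - q.1) * n) = ee d ((p.1 - q.1) * p.2) * ee d (-((q - p).1 * (n - p.2))) := by
    rw [← ee_add]; congr 1
    simp only [Prod.fst_sub]
    ring
  have harg2 : n - q.2 = n - p.2 - (q - p).2 := by
    simp only [Prod.snd_sub]; ring
  rw [harg1, harg2]; ring

lemma Gmat_eq (g : ZMod d → ℂ) (p q : ZMod d × ZMod d) :
    Gmat d g p q = fC d g (q - p) := by
  unfold Gmat fC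
  rw [inn_modT, norm_mul, abs_ee, one_mul, Complex.sq_norm, Complex.mul_conj]

lemma fC_eq_zero_iff (g : ZMod d → ℂ) (ν : ZMod d × ZMod d) :
    fC d g ν = 0 ↔ Af d g ν = 0 := by
  unfold fC
  rw [mul_eq_zero, map_eq_zero]
  tauto

lemma sum_ee_weight (F G : ZMod d → ℂ) (m : ZMod d) :
    ∑ k : ZMod d, ee d (k * m) *
        ((∑ n : ZMod d, ee d (-(k * n)) * F n) * (∑ p : ZMod d, ee d (k * p) * G p))
      = d * ∑ n : ZMod d, F n * G (n - m) := by
  have step1 : ∀ k : ZMod d, ee d (k * m) *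
        ((∑ n : ZMod d, ee d (-(k * n)) * F n) * (∑ p : ZMod d, ee d (k * p) * G p))
      = ∑ n : ZMod d, ∑ p : ZMod d, ee d ((m - n + p) * k) * (F n * G p) := by
    intro k
    rw [Finset.sum_mul_sum, Finset.mul_sum]
    refine Finset.sum_congr rfl (fun n _ => ?_)
    rw [Finset.mul_sum]
    refine Finset.sum_congr rfl (fun p _ => ?_)
    have : ee d (k * m) * (ee d (-(k * n)) * ee d (k * p)) = ee d ((m - n + p) * k) := by
      rw [← ee_add, ← ee_add]; congr 1; ring
    calc ee d (k * m) * (ee d (-(k * n)) * F n * (ee d (k * p) * G p))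
        = (ee d (k * m) * (ee d (-(k * n)) * ee d (k * p))) * (F n * G p) := by ring
      _ = _ := by rw [this]
  simp_rw [step1]
  rw [Finset.sum_comm]
  have step2 : ∀ n : ZMod d, ∑ k : ZMod d, ∑ p : ZMod d, ee d ((m - n + p) * k) * (F n * G p)
      = d * (F n * G (n - m)) := by
    intro n
    rw [Finset.sum_comm]
    have : ∀ p : ZMod d, ∑ k : ZMod d, ee d ((m - n + p) * k) * (F n * G p)
        = (if m - n + p = 0 then (d:ℂ) else 0) * (F n * G p) := by
      intro p
      rw [← Finset.sum_mul, sum_ee_mul]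
    simp_rw [this]
    rw [Finset.sum_eq_single (n - m)]
    · rw [if_pos (by ring)]
    · intro b _ hb
      rw [if_neg (fun h => hb (by linear_combination h)), zero_mul]
    · intro h; exact absurd (Finset.mem_univ _) h
  simp_rw [step2]
  rw [← Finset.mul_sum]

lemma conj_Af (g : ZMod d → ℂ) (ν : ZMod d × ZMod d) :
    (starRingEnd ℂ) (Af d g ν)
      = ∑ p : ZMod d, ee d (ν.1 * p) * ((starRingEnd ℂ) (g p) * g (p - ν.2)) := by
  rw [Af_eq, map_sum]
  refine Finset.sum_congr rfl fun p _ => ?_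
  rw [_root_.map_mul, _root_.map_mul, conj_ee, neg_neg, Complex.conj_conj]

lemma fC_col (g : ZMod d → ℂ) (ℓ m : ZMod d) :
    ∑ k : ZMod d, ee d (k * m) * fC d g (k, ℓ)
      = d * ∑ n : ZMod d, (g n * (starRingEnd ℂ) (g (n - ℓ)))
          * ((starRingEnd ℂ) (g (n - m)) * g (n - m - ℓ)) := by
  have h := sum_ee_weight (d := d) (fun n => g n * (starRingEnd ℂ) (g (n - ℓ)))
    (fun p => (starRingEnd ℂ) (g p) * g (p - ℓ)) m
  rw [← h]
  refine Finset.sum_congr rfl fun k _ => ?_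
  congr 1
  rw [fC, conj_Af, Af_eq]

lemma selfdual (g : ZMod d → ℂ) (k' ℓ' : ZMod d) :
    ∑ ν : ZMod d × ZMod d, ee d (ν.1 * ℓ' - ν.2 * k') * fC d g ν = d * fC d g (k', ℓ') := by
  calc ∑ ν : ZMod d × ZMod d, ee d (ν.1 * ℓ' - ν.2 * k') * fC d g ν
      = ∑ ℓ : ZMod d, ee d (-(ℓ * k')) * ∑ k : ZMod d, ee d (k * ℓ') * fC d g (k, ℓ) := by
        rw [Fintype.sum_prod_type_right]
        refine Finset.sum_congr rfl fun ℓ _ => ?_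
        rw [Finset.mul_sum]
        refine Finset.sum_congr rfl fun k _ => ?_
        rw [← mul_assoc, ← ee_add]
        congr 2
        ring
    _ = ∑ ℓ : ZMod d, ∑ n : ZMod d, (d : ℂ) * (ee d (-(ℓ * k')) *
          ((g n * (starRingEnd ℂ) (g (n - ℓ))) * ((starRingEnd ℂ) (g (n - ℓ')) * g (n - ℓ' - ℓ)))) := by
        refine Finset.sum_congr rfl fun ℓ _ => ?_
        rw [fC_col, Finset.mul_sum, Finset.mul_sum]
        exact Finset.sum_congr rfl fun n _ => by ring
    _ = ∑ n : ZMod d, ∑ ℓ : ZMod d, (d : ℂ) * (ee d (-(ℓ * k')) *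
          ((g n * (starRingEnd ℂ) (g (n - ℓ))) * ((starRingEnd ℂ) (g (n - ℓ')) * g (n - ℓ' - ℓ)))) :=
        Finset.sum_comm
    _ = ∑ n : ZMod d, ∑ p : ZMod d, (d : ℂ) * (ee d (-((n - p) * k')) *
          ((g n * (starRingEnd ℂ) (g p)) * ((starRingEnd ℂ) (g (n - ℓ')) * g (p - ℓ')))) := by
        refine Finset.sum_congr rfl fun n _ => ?_
        refine (Fintype.sum_equiv (Equiv.subLeft n) _ _ fun p => ?_).symm
        simp only [Equiv.subLeft_apply]
        have h1 : n - (n - p) = p := by ring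
        have h2 : n - ℓ' - (n - p) = p - ℓ' := by ring
        rw [h1, h2]
    _ = d * ((∑ n : ZMod d, ee d (-(k' * n)) * (g n * (starRingEnd ℂ) (g (n - ℓ'))))
          * (∑ p : ZMod d, ee d (k' * p) * ((starRingEnd ℂ) (g p) * g (p - ℓ')))) := by
        rw [Finset.sum_mul_sum, Finset.mul_sum]
        refine Finset.sum_congr rfl fun n _ => ?_
        rw [Finset.mul_sum]
        refine Finset.sum_congr rfl fun p _ => ?_
        have : ee d (-((n - p) * k')) = ee d (-(k' * n)) * ee d (k' * p) := by
          rw [← ee_add]; congr 1; ring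
        rw [this]
        ring
    _ = d * fC d g (k', ℓ') := by
        rw [fC, conj_Af, Af_eq]

def Wm (d : ℕ) [NeZero d] : Matrix (ZMod d × ZMod d) (ZMod d × ZMod d) ℂ :=
  fun p ν => ee d (p.1 * ν.2 - p.2 * ν.1)

lemma Wm_mul_conjT : Wm d * (Wm d)ᴴ = ((d : ℂ) ^ 2) • (1 : Matrix (ZMod d × ZMod d) (ZMod d × ZMod d) ℂ) := by
  ext p q
  rw [Matrix.mul_apply]
  have : ∀ ν : ZMod d × ZMod d, Wm d p ν * (Wm d)ᴴ ν q
      = ee d (-((p.2 - q.2) * ν.1)) * ee d ((p.1 - q.1) * ν.2) := by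
    intro ν
    rw [Matrix.conjTranspose_apply]
    show ee d (p.1 * ν.2 - p.2 * ν.1) * star (ee d (q.1 * ν.2 - q.2 * ν.1)) = _
    rw [← starRingEnd_apply, conj_ee, ← ee_add, ← ee_add]
    congr 1
    ring
  simp_rw [this]
  rw [Fintype.sum_prod_type]
  dsimp only
  rw [← Finset.sum_mul_sum]
  have e1 : ∀ x : ZMod d, -((p.2 - q.2) * x) = (-(p.2 - q.2)) * x := fun x => by ring
  simp_rw [e1]
  rw [sum_ee_mul, sum_ee_mul]
  simp only [neg_eq_zero, sub_eq_zero]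
  rw [Matrix.smul_apply, Matrix.one_apply]
  by_cases h1 : p.1 = q.1 <;> by_cases h2 : p.2 = q.2 <;>
    simp [h1, h2, Prod.ext_iff, sq] <;> tauto

lemma Gmat_diag (g : ZMod d → ℂ) :
    Gmat d g = Wm d * Matrix.diagonal (fun ν => fC d g ν / d) * (Wm d)ᴴ := by
  ext p q
  rw [Gmat_eq, Matrix.mul_apply]
  have hterm : ∀ ν : ZMod d × ZMod d,
      (Wm d * Matrix.diagonal (fun ν => fC d g ν / d)) p ν * (Wm d)ᴴ ν q
        = (1 / (d:ℂ)) * (ee d (ν.1 * (q - p).2 - ν.2 * (q - p).1) * fC d g ν) := by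
    intro ν
    rw [Matrix.mul_diagonal, Matrix.conjTranspose_apply, ← starRingEnd_apply]
    show Wm d p ν * (fC d g ν / d) * (starRingEnd ℂ) (Wm d q ν) = _
    rw [Wm]
    show ee d (p.1 * ν.2 - p.2 * ν.1) * (fC d g ν / ↑d) * (starRingEnd ℂ) (ee d (q.1 * ν.2 - q.2 * ν.1)) = _
    rw [conj_ee]
    have : ee d (p.1 * ν.2 - p.2 * ν.1) * ee d (-(q.1 * ν.2 - q.2 * ν.1))
        = ee d (ν.1 * (q - p).2 - ν.2 * (q - p).1) := by
      rw [← ee_add]; congr 1; simp only [Prod.fst_sub, Prod.snd_sub]; ring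
    calc ee d (p.1 * ν.2 - p.2 * ν.1) * (fC d g ν / ↑d) * ee d (-(q.1 * ν.2 - q.2 * ν.1))
        = (ee d (p.1 * ν.2 - p.2 * ν.1) * ee d (-(q.1 * ν.2 - q.2 * ν.1))) * (fC d g ν / ↑d) := by ring
      _ = _ := by rw [this]; field_simp
  simp_rw [hterm]
  rw [← Finset.mul_sum, selfdual (d := d) g (q - p).1 (q - p).2]
  have hd : (d : ℂ) ≠ 0 := Nat.cast_ne_zero.mpr (NeZero.ne d)
  field_simp

lemma Wm_det_isUnit : IsUnit (Wm d).det := by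
  have hd : (d : ℂ) ≠ 0 := Nat.cast_ne_zero.mpr (NeZero.ne d)
  apply Matrix.isUnit_det_of_right_inverse (B := (1 / (d:ℂ)^2) • (Wm d)ᴴ)
  rw [Matrix.mul_smul, Wm_mul_conjT, smul_smul]
  rw [one_div, inv_mul_cancel₀ (pow_ne_zero 2 hd), one_smul]

lemma rank_eq_card (g : ZMod d → ℂ) :
    (Gmat d g).rank
      = (Finset.univ.filter (fun ν : ZMod d × ZMod d => Af d g ν ≠ 0)).card := by
  classical
  have hdetH : IsUnit (Wm d)ᴴ.det := by
    rw [Matrix.det_conjTranspose]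
    exact (Wm_det_isUnit (d := d)).star
  rw [Gmat_diag, Matrix.rank_mul_eq_left_of_isUnit_det _ _ hdetH,
    Matrix.rank_mul_eq_right_of_isUnit_det _ _ (Wm_det_isUnit (d := d)),
    Matrix.rank_diagonal]
  rw [Fintype.card_subtype]
  congr 1
  ext ν
  simp only [Finset.mem_filter, Finset.mem_univ, true_and]
  have hd : (d : ℂ) ≠ 0 := Nat.cast_ne_zero.mpr (NeZero.ne d)
  rw [div_ne_zero_iff]
  exact ⟨fun h hz => h.1 ((fC_eq_zero_iff g ν).mpr hz),
    fun h => ⟨fun hz => h ((fC_eq_zero_iff g ν).mp hz), hd⟩⟩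

def colA (d : ℕ) [NeZero d] (g : ZMod d → ℂ) (ℓ : ZMod d) : Finset (ZMod d) :=
  Finset.univ.filter (fun k => Af d g (k, ℓ) ≠ 0)

lemma card_S_eq (g : ZMod d → ℂ) :
    (Finset.univ.filter (fun ν : ZMod d × ZMod d => Af d g ν ≠ 0)).card
      = ∑ ℓ : ZMod d, (colA d g ℓ).card := by
  classical
  rw [Finset.card_eq_sum_card_fiberwise
    (f := fun ν : ZMod d × ZMod d => ν.2) (t := Finset.univ) (fun x _ => Finset.mem_univ _)]
  refine Finset.sum_congr rfl fun ℓ _ => ?_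
  refine Finset.card_bij (fun ν _ => ν.1) ?_ ?_ ?_
  · intro ν hν
    simp only [Finset.mem_filter, Finset.mem_univ, true_and] at hν ⊢
    unfold colA
    simp only [Finset.mem_filter, Finset.mem_univ, true_and]
    have : (ν.1, ℓ) = ν := by rw [← hν.2]
    rw [this]
    exact hν.1
  · intro ν1 h1 ν2 h2 h
    simp only [Finset.mem_filter, Finset.mem_univ, true_and] at h1 h2
    exact Prod.ext h (h1.2.trans h2.2.symm)
  · intro k hk
    unfold colA at hk
    simp only [Finset.mem_filter, Finset.mem_univ, true_and] at hk
    exact ⟨(k, ℓ), by simp [hk], rfl⟩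

lemma inv_sum_single (g : ZMod d → ℂ) (ℓ₀ k₀ : ZMod d)
    (h : ∀ k, k ≠ k₀ → Af d g (k, ℓ₀) = 0) (n : ZMod d) :
    (d : ℂ) * (g n * (starRingEnd ℂ) (g (n - ℓ₀))) = ee d (k₀ * n) * Af d g (k₀, ℓ₀) := by
  rw [← inv_sum g n ℓ₀]
  rw [Finset.sum_eq_single k₀]
  · intro b _ hb; rw [h b hb, mul_zero]
  · intro hh; exact absurd (Finset.mem_univ _) hh

lemma Af00 (g : ZMod d → ℂ) (hg : ∑ n : ZMod d, ‖g n‖ ^ 2 = 1) :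
    Af d g (0, 0) = 1 := by
  rw [Af_eq]
  have : ∀ n : ZMod d, ee d (-((0:ZMod d) * n)) * (g n * (starRingEnd ℂ) (g (n - 0)))
      = ((‖g n‖ ^ 2 : ℝ) : ℂ) := by
    intro n
    rw [zero_mul, neg_zero, ee_zero, one_mul, sub_zero, Complex.mul_conj, Complex.sq_norm]
  simp_rw [this]
  rw [← Complex.ofReal_sum, hg, Complex.ofReal_one]

lemma col_nonempty (g : ZMod d → ℂ)
    (hsupp : d < 2 * {n : ZMod d | g n ≠ 0}.ncard) (ℓ : ZMod d) :
    ∃ k, Af d g (k, ℓ) ≠ 0 := by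
  classical
  set T : Finset (ZMod d) := Finset.univ.filter (fun n => g n ≠ 0) with hT
  have hncard : {n : ZMod d | g n ≠ 0}.ncard = T.card := by
    rw [hT]
    rw [← Set.ncard_coe_finset]
    congr 1
    ext n
    simp
  set T' : Finset (ZMod d) := Finset.univ.filter (fun n => g (n - ℓ) ≠ 0) with hT'
  have hcardT' : T'.card = T.card := by
    refine Finset.card_bij (fun n _ => n - ℓ) ?_ ?_ ?_
    · intro n hn
      rw [hT', Finset.mem_filter] at hn
      rw [hT, Finset.mem_filter]
      exact ⟨Finset.mem_univ _, hn.2⟩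
    · intro a _ b _ h; exact by linear_combination (h : a - ℓ = b - ℓ)
    · intro b hb
      rw [hT, Finset.mem_filter] at hb
      refine ⟨b + ℓ, ?_, by ring⟩
      rw [hT', Finset.mem_filter]
      exact ⟨Finset.mem_univ _, by simpa using hb.2⟩
  have hinter : (T ∩ T').Nonempty := by
    rw [← Finset.card_pos]
    have hub : (T ∪ T').card ≤ d := by
      have := Finset.card_le_card (Finset.subset_univ (T ∪ T'))
      simpa [ZMod.card] using this
    have := Finset.card_union_add_card_inter T T'
    omega
  obtain ⟨n₀, hn₀⟩ := hinter
  simp only [hT, hT', Finset.mem_inter, Finset.mem_filter, Finset.mem_univ, true_and] at hn₀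
  by_contra hcon
  push_neg at hcon
  have h0 := inv_sum g n₀ ℓ
  rw [Finset.sum_eq_zero (fun k _ => by rw [hcon k, mul_zero])] at h0
  have hd : (d : ℂ) ≠ 0 := Nat.cast_ne_zero.mpr (NeZero.ne d)
  have := h0.symm
  rw [mul_eq_zero, mul_eq_zero] at this
  rcases this with h | h
  · exact hd h
  · rcases h with h | h
    · exact hn₀.1 h
    · exact hn₀.2 (by simpa using h)

lemma const_of_period (hp : d.Prime) {c : ZMod d} (hc : c ≠ 0) (u : ZMod d → ℂ)
    (h : ∀ n, u (n - c) = u n) : ∀ m n : ZMod d, u m = u n := by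
  haveI := Fact.mk hp
  have key : ∀ t : ℕ, ∀ n, u (n - (t : ZMod d) * c) = u n := by
    intro t
    induction t with
    | zero => intro n; simp
    | succ t ih =>
      intro n
      have harg : n - ((t + 1 : ℕ) : ZMod d) * c = (n - c) - (t : ZMod d) * c := by
        push_cast; ring
      rw [harg, ih (n - c), h n]
  intro m n
  have hx : (((n - m) * c⁻¹).val : ZMod d) = (n - m) * c⁻¹ :=
    ZMod.natCast_rightInverse _
  have harg : m = n - (((n - m) * c⁻¹).val : ZMod d) * c := by
    rw [hx, mul_assoc, inv_mul_cancel₀ hc, mul_one]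
    ring
  rw [harg, key]

lemma u_sum (g : ZMod d → ℂ) (hg : ∑ n : ZMod d, ‖g n‖ ^ 2 = 1) :
    ∑ n : ZMod d, g n * (starRingEnd ℂ) (g n) = 1 := by
  have h := Af00 g hg
  rw [Af_eq] at h
  rw [← h]
  refine Finset.sum_congr rfl fun n _ => ?_
  rw [zero_mul, neg_zero, ee_zero, one_mul, sub_zero]

lemma line_case (hp : d.Prime) (g : ZMod d → ℂ)
    (hg : ∑ n : ZMod d, ‖g n‖ ^ 2 = 1)
    (ℓ₀ k₀ : ZMod d) (hℓ₀ : ℓ₀ ≠ 0)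
    (hone : ∀ k, k ≠ k₀ → Af d g (k, ℓ₀) = 0) (hk₀c : Af d g (k₀, ℓ₀) ≠ 0)
    (hodd : Odd d) :
    ∀ ν : ZMod d × ZMod d, Af d g ν ≠ 0 ↔ ν.1 = ν.2 * ℓ₀⁻¹ * k₀ := by
  haveI := Fact.mk hp
  have hd : (d : ℂ) ≠ 0 := Nat.cast_ne_zero.mpr (NeZero.ne d)
  set c := Af d g (k₀, ℓ₀) with hc
  have R : ∀ n, g n * (starRingEnd ℂ) (g (n - ℓ₀)) = ee d (k₀ * n) * c / d := by
    intro n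
    have h := inv_sum_single g ℓ₀ k₀ hone n
    rw [eq_div_iff hd]
    linear_combination h
  have hRne : ∀ n : ZMod d, ee d (k₀ * n) * c / d ≠ 0 :=
    fun n => div_ne_zero (mul_ne_zero (ee_ne_zero _) hk₀c) hd
  have hgne : ∀ n, g n ≠ 0 := by
    intro n hn
    have h := R n
    rw [hn, zero_mul] at h
    exact hRne n h.symm
  set u : ZMod d → ℂ := fun n => g n * (starRingEnd ℂ) (g n) with hu
  have hu_ne : ∀ n, u n ≠ 0 := fun n =>
    mul_ne_zero (hgne n) (fun hz => hgne n (by simpa using congrArg (starRingEnd ℂ) hz))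
  have hprod : ∀ n, u n * u (n - ℓ₀) = (c * (starRingEnd ℂ) c) / ((d : ℂ) * d) := by
    intro n
    have h1 := R n
    have h2 := congrArg (starRingEnd ℂ) (R n)
    simp only [map_div₀, _root_.map_mul, conj_ee, Complex.conj_conj, Complex.conj_natCast] at h2
    calc u n * u (n - ℓ₀)
        = (g n * (starRingEnd ℂ) (g (n - ℓ₀))) *
          ((starRingEnd ℂ) (g n) * g (n - ℓ₀)) := by rw [hu]; ring
      _ = (ee d (k₀ * n) * c / ↑d) * (ee d (-(k₀ * n)) * (starRingEnd ℂ) c / ↑d) := by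
          rw [h1, h2]
      _ = (ee d (k₀ * n) * ee d (-(k₀ * n))) * (c * (starRingEnd ℂ) c) / ((d:ℂ) * d) := by
          ring
      _ = (c * (starRingEnd ℂ) c) / ((d : ℂ) * d) := by
          rw [mul_comm (ee d (k₀ * n)), ee_neg_mul, one_mul]
  have h2ne : (2 : ZMod d) ≠ 0 := by
    intro h
    have : (d : ℕ) ∣ 2 := by
      have := (ZMod.natCast_eq_zero_iff 2 d).mp (by exact_mod_cast h)
      exact this
    have h1 := Nat.le_of_dvd (by norm_num) this
    have h2 := Nat.odd_iff.mp hodd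
    have h3 := hp.two_le
    omega
  have hper : ∀ n, u (n - 2 * ℓ₀) = u n := by
    intro n
    have ha := hprod n
    have hb := hprod (n - ℓ₀)
    have harg : n - ℓ₀ - ℓ₀ = n - 2 * ℓ₀ := by ring
    rw [harg] at hb
    refine mul_left_cancel₀ (hu_ne (n - ℓ₀)) ?_
    calc u (n - ℓ₀) * u (n - 2 * ℓ₀) = c * (starRingEnd ℂ) c / (↑d * ↑d) := hb
      _ = u n * u (n - ℓ₀) := ha.symm
      _ = u (n - ℓ₀) * u n := by ring
  have huconst : ∀ m n : ZMod d, u m = u n :=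
    const_of_period hp (mul_ne_zero h2ne hℓ₀) u hper
  have husum : ∑ n : ZMod d, u n = 1 := u_sum g hg
  have huval : ∀ n, u n = 1 / d := by
    intro n
    have : ∑ m : ZMod d, u m = (d : ℂ) * u n := by
      rw [Finset.sum_congr rfl (fun m _ => huconst m n), Finset.sum_const]
      simp [ZMod.card]
    rw [husum] at this
    rw [eq_div_iff hd]
    linear_combination -this
  have cKey : ∀ m, (starRingEnd ℂ) (g (m - ℓ₀)) = c * ee d (k₀ * m) * (starRingEnd ℂ) (g m) := by
    intro m
    apply mul_left_cancel₀ (hgne m)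
    rw [R m]
    have : g m * (c * ee d (k₀ * m) * (starRingEnd ℂ) (g m))
        = c * ee d (k₀ * m) * u m := by rw [hu]; ring
    rw [this, huval m]
    field_simp
  have hrec : ∀ ℓ k, Af d g (k, ℓ + ℓ₀) = c * ee d (-(k₀ * ℓ)) * Af d g (k - k₀, ℓ) := by
    intro ℓ k
    rw [Af_eq, Af_eq, Finset.mul_sum]
    refine Finset.sum_congr rfl fun n _ => ?_
    simp only
    have harg : n - (ℓ + ℓ₀) = (n - ℓ) - ℓ₀ := by ring
    rw [harg, cKey (n - ℓ)]
    have hee : ee d (-(k * n)) * ee d (k₀ * (n - ℓ))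
        = ee d (-(k₀ * ℓ)) * ee d (-((k - k₀) * n)) := by
      rw [← ee_add, ← ee_add]; congr 1; ring
    calc ee d (-(k * n)) * (g n * (c * ee d (k₀ * (n - ℓ)) * (starRingEnd ℂ) (g (n - ℓ))))
        = c * (ee d (-(k * n)) * ee d (k₀ * (n - ℓ))) * (g n * (starRingEnd ℂ) (g (n - ℓ))) := by
          ring
      _ = c * (ee d (-(k₀ * ℓ)) * ee d (-((k - k₀) * n))) * (g n * (starRingEnd ℂ) (g (n - ℓ))) := by
          rw [hee]
      _ = c * ee d (-(k₀ * ℓ)) * (ee d (-((k - k₀) * n)) * (g n * (starRingEnd ℂ) (g (n - ℓ)))) := by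
          ring
  have hbase : ∀ k, Af d g (k, 0) = if k = 0 then 1 else 0 := by
    intro k
    rw [Af_eq]
    have : ∀ n : ZMod d, ee d (-(k * n)) * (g n * (starRingEnd ℂ) (g (n - 0)))
        = (1 / d) * ee d ((-k) * n) := by
      intro n
      rw [sub_zero]
      have : g n * (starRingEnd ℂ) (g n) = 1 / d := huval n
      rw [this]
      have : -(k * n) = (-k) * n := by ring
      rw [this]
      ring
    simp_rw [this]
    rw [← Finset.mul_sum, sum_ee_mul]
    by_cases hk : k = 0
    · rw [if_pos (by simp [hk]), if_pos hk]
      field_simp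
    · rw [if_neg (by simpa using hk), if_neg hk, mul_zero]
  have hstep : ∀ t : ℕ, ∀ k, Af d g (k, (t : ZMod d) * ℓ₀) ≠ 0 ↔ k = (t : ZMod d) * k₀ := by
    intro t
    induction t with
    | zero =>
      intro k
      simp only [Nat.cast_zero, zero_mul]
      rw [hbase]
      split_ifs with h
      · simpa using h
      · simpa using h
    | succ t ih =>
      intro k
      have harg : ((t + 1 : ℕ) : ZMod d) * ℓ₀ = (t : ZMod d) * ℓ₀ + ℓ₀ := by push_cast; ring
      rw [harg, hrec]
      rw [mul_ne_zero_iff, mul_ne_zero_iff]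
      constructor
      · intro h
        have := (ih (k - k₀)).mp h.2
        push_cast
        linear_combination this
      · intro h
        refine ⟨⟨hk₀c, ee_ne_zero _⟩, (ih (k - k₀)).mpr ?_⟩
        push_cast at h
        linear_combination h
  intro ν
  have hx : (((ν.2 * ℓ₀⁻¹).val : ℕ) : ZMod d) = ν.2 * ℓ₀⁻¹ := ZMod.natCast_rightInverse _
  have h := hstep (ν.2 * ℓ₀⁻¹).val ν.1
  rw [hx] at h
  have harg : ν.2 * ℓ₀⁻¹ * ℓ₀ = ν.2 := by
    rw [mul_assoc, inv_mul_cancel₀ hℓ₀, mul_one]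
  rw [harg, Prod.mk.eta] at h
  exact h

lemma two_ne_zero_zmod (hp : d.Prime) (hodd : Odd d) : (2 : ZMod d) ≠ 0 := by
  intro h
  have hdvd : (d : ℕ) ∣ 2 := (ZMod.natCast_eq_zero_iff 2 d).mp (by exact_mod_cast h)
  have h1 := Nat.le_of_dvd (by norm_num) hdvd
  have h2 := Nat.odd_iff.mp hodd
  have h3 := hp.two_le
  omega

lemma graph_card (f : ZMod d → ZMod d) :
    (Finset.univ.filter (fun ν : ZMod d × ZMod d => ν.1 = f ν.2)).card = d := by
  have himg : Finset.univ.filter (fun ν : ZMod d × ZMod d => ν.1 = f ν.2)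
      = Finset.image (fun ℓ => (f ℓ, ℓ)) Finset.univ := by
    ext ν
    simp only [Finset.mem_filter, Finset.mem_univ, true_and, Finset.mem_image]
    constructor
    · intro h
      exact ⟨ν.2, by rw [← h, Prod.mk.eta]⟩
    · rintro ⟨ℓ, rfl⟩
      rfl
  rw [himg, Finset.card_image_of_injective _ (fun a b h => congrArg Prod.snd h),
    Finset.card_univ, ZMod.card]

lemma no_two (hp : d.Prime) (hodd : Odd d) (g : ZMod d → ℂ)
    (huval : ∀ n, g n * (starRingEnd ℂ) (g n) = 1 / d)
    (ℓ k₁ k₂ : ZMod d) (hne : k₁ ≠ k₂)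
    (hA1 : Af d g (k₁, ℓ) ≠ 0) (hA2 : Af d g (k₂, ℓ) ≠ 0)
    (hout : ∀ k, k ≠ k₁ → k ≠ k₂ → Af d g (k, ℓ) = 0) : False := by
  haveI := Fact.mk hp
  have hd : (d : ℂ) ≠ 0 := Nat.cast_ne_zero.mpr (NeZero.ne d)
  set A₁ := Af d g (k₁, ℓ) with hA₁def
  set A₂ := Af d g (k₂, ℓ) with hA₂def
  have key : ∀ n, (d : ℂ) * (g n * (starRingEnd ℂ) (g (n - ℓ)))
      = ee d (k₁ * n) * A₁ + ee d (k₂ * n) * A₂ := by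
    intro n
    rw [← inv_sum g n ℓ]
    rw [← Finset.sum_subset (Finset.subset_univ ({k₁, k₂} : Finset (ZMod d)))
      (fun k _ hk => ?_)]
    · rw [Finset.sum_pair hne]
    · have hk' : k ≠ k₁ ∧ k ≠ k₂ := by simpa using hk
      rw [hout k hk'.1 hk'.2, mul_zero]
  have E : ∀ n : ZMod d, A₁ * (starRingEnd ℂ) A₁ + A₂ * (starRingEnd ℂ) A₂
      + ee d ((k₁ - k₂) * n) * (A₁ * (starRingEnd ℂ) A₂)
      + ee d ((k₂ - k₁) * n) * (A₂ * (starRingEnd ℂ) A₁) = 1 := by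
    intro n
    have ha := key n
    have hb := congrArg (starRingEnd ℂ) (key n)
    simp only [_root_.map_mul, map_add, conj_ee, Complex.conj_natCast, Complex.conj_conj] at hb
    have hlhs : ((d:ℂ) * (g n * (starRingEnd ℂ) (g (n - ℓ))))
        * ((d:ℂ) * ((starRingEnd ℂ) (g n) * g (n - ℓ))) = 1 := by
      calc ((d:ℂ) * (g n * (starRingEnd ℂ) (g (n - ℓ))))
            * ((d:ℂ) * ((starRingEnd ℂ) (g n) * g (n - ℓ)))
          = ((d:ℂ) * (d:ℂ)) * ((g n * (starRingEnd ℂ) (g n))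
              * (g (n - ℓ) * (starRingEnd ℂ) (g (n - ℓ)))) := by ring
        _ = ((d:ℂ) * (d:ℂ)) * ((1/(d:ℂ)) * (1/(d:ℂ))) := by rw [huval n, huval (n - ℓ)]
        _ = 1 := by field_simp
    rw [ha, hb] at hlhs
    have m11 : ee d (k₁ * n) * ee d (-(k₁ * n)) = 1 := by rw [mul_comm]; exact ee_neg_mul _
    have m22 : ee d (k₂ * n) * ee d (-(k₂ * n)) = 1 := by rw [mul_comm]; exact ee_neg_mul _
    have m12 : ee d (k₁ * n) * ee d (-(k₂ * n)) = ee d ((k₁ - k₂) * n) := by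
      rw [← ee_add]; congr 1; ring
    have m21 : ee d (k₂ * n) * ee d (-(k₁ * n)) = ee d ((k₂ - k₁) * n) := by
      rw [← ee_add]; congr 1; ring
    have expand : (ee d (k₁ * n) * A₁ + ee d (k₂ * n) * A₂)
        * (ee d (-(k₁ * n)) * (starRingEnd ℂ) A₁ + ee d (-(k₂ * n)) * (starRingEnd ℂ) A₂)
        = (ee d (k₁ * n) * ee d (-(k₁ * n))) * (A₁ * (starRingEnd ℂ) A₁)
          + (ee d (k₂ * n) * ee d (-(k₂ * n))) * (A₂ * (starRingEnd ℂ) A₂)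
          + (ee d (k₁ * n) * ee d (-(k₂ * n))) * (A₁ * (starRingEnd ℂ) A₂)
          + (ee d (k₂ * n) * ee d (-(k₁ * n))) * (A₂ * (starRingEnd ℂ) A₁) := by ring
    rw [expand, m11, m22, m12, m21, one_mul, one_mul] at hlhs
    exact hlhs
  set x := ee d (k₁ - k₂) with hxdef
  set y := ee d (k₂ - k₁) with hydef
  have hxy : x * y = 1 := by
    rw [hxdef, hydef, ← ee_add, show (k₁ - k₂) + (k₂ - k₁) = 0 by ring, ee_zero]
  have hx1 : x ≠ 1 := fun h => hne (sub_eq_zero.mp ((ee_eq_one_iff _).mp h))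
  have hxx : x * x ≠ 1 := by
    intro h
    rw [hxdef, ← ee_add] at h
    have h0 := (ee_eq_one_iff _).mp h
    have h2 : (2 : ZMod d) * (k₁ - k₂) = 0 := by linear_combination h0
    rcases mul_eq_zero.mp h2 with h3 | h3
    · exact two_ne_zero_zmod hp hodd h3
    · exact hne (sub_eq_zero.mp h3)
  have e0 := E 0
  have e1 := E 1
  have e2 := E 2
  simp only [mul_zero, ee_zero, one_mul] at e0
  rw [mul_one, mul_one, ← hxdef, ← hydef] at e1
  have h2x : ee d ((k₁ - k₂) * 2) = x * x := by
    rw [show (k₁ - k₂) * 2 = (k₁ - k₂) + (k₁ - k₂) by ring, ee_add]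
  have h2y : ee d ((k₂ - k₁) * 2) = y * y := by
    rw [show (k₂ - k₁) * 2 = (k₂ - k₁) + (k₂ - k₁) by ring, ee_add]
  rw [h2x, h2y] at e2
  set w := A₁ * (starRingEnd ℂ) A₂ with hwdef
  set w' := A₂ * (starRingEnd ℂ) A₁ with hwdef'
  have E1 : w * (x - 1) + w' * (y - 1) = 0 := by linear_combination e1 - e0
  have E2 : w * (x * x - 1) + w' * (y * y - 1) = 0 := by linear_combination e2 - e0
  have hw : w * ((x - 1) * (y - 1) * (y - x)) = 0 := by
    linear_combination (y * y - 1) * E1 - (y - 1) * E2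
  have hy1 : y - 1 ≠ 0 := by
    intro h
    have : y = 1 := by linear_combination h
    rw [this, mul_one] at hxy
    exact hx1 hxy
  have hyx : y - x ≠ 0 := by
    intro h
    have : y = x := by linear_combination h
    rw [this] at hxy
    exact hxx (by linear_combination hxy)
  have hfac : (x - 1) * (y - 1) * (y - x) ≠ 0 :=
    mul_ne_zero (mul_ne_zero (sub_ne_zero.mpr hx1) hy1) hyx
  rcases mul_eq_zero.mp hw with h | h
  · rcases mul_eq_zero.mp h with h' | h'
    · exact hA1 h'
    · exact hA2 (by simpa using congrArg (starRingEnd ℂ) h')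
  · exact hfac h


/-- for an odd prime `d` and a unit vector `g` with
`2‖g‖₀ > d`, if `rank G(g) ≠ d` then `rank G(g) ≥ 2d`. -/
theorem stmt17 (d : ℕ) [NeZero d] (hp : d.Prime) (hodd : Odd d)
    (g : ZMod d → ℂ)
    (hg : ∑ n : ZMod d, ‖g n‖ ^ 2 = 1)
    (hsupp : d < 2 * {n : ZMod d | g n ≠ 0}.ncard)
    (hrank : (Gmat d g).rank ≠ d) :
    2 * d ≤ (Gmat d g).rank := by
  classical
  haveI := Fact.mk hp
  have hd3 : 3 ≤ d := by
    have h1 := hp.two_le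
    have h2 := Nat.odd_iff.mp hodd
    omega
  rw [rank_eq_card g, card_S_eq g] at hrank ⊢
  have hpos : ∀ ℓ : ZMod d, 1 ≤ (colA d g ℓ).card := by
    intro ℓ
    obtain ⟨k, hk⟩ := col_nonempty g hsupp ℓ
    exact Finset.card_pos.mpr ⟨k, by simp [colA, hk]⟩
  have hno1 : ∀ ℓ : ZMod d, ℓ ≠ 0 → (colA d g ℓ).card ≠ 1 := by
    intro ℓ hℓ hcard
    obtain ⟨k₀, hk₀⟩ := Finset.card_eq_one.mp hcard
    have hmem : ∀ k : ZMod d, Af d g (k, ℓ) ≠ 0 ↔ k = k₀ := by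
      intro k
      have h1 : (Af d g (k, ℓ) ≠ 0) ↔ k ∈ colA d g ℓ := by simp [colA]
      rw [h1, hk₀, Finset.mem_singleton]
    have hline := line_case hp g hg ℓ k₀ hℓ
      (fun k hk => by_contra fun h => hk ((hmem k).mp h)) ((hmem k₀).mpr rfl) hodd
    apply hrank
    rw [← card_S_eq g]
    have heq : (Finset.univ.filter (fun ν : ZMod d × ZMod d => Af d g ν ≠ 0))
        = Finset.univ.filter (fun ν : ZMod d × ZMod d => ν.1 = (fun t => t * ℓ⁻¹ * k₀) ν.2) := by
      ext ν
      simp only [Finset.mem_filter, Finset.mem_univ, true_and]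
      exact hline ν
    rw [heq]
    exact graph_card (fun t => t * ℓ⁻¹ * k₀)
  have hge2 : ∀ ℓ : ZMod d, ℓ ≠ 0 → 2 ≤ (colA d g ℓ).card := by
    intro ℓ hℓ
    have := hpos ℓ
    have := hno1 ℓ hℓ
    omega
  by_cases h0 : (colA d g 0).card = 1
  · obtain ⟨k₀, hk₀⟩ := Finset.card_eq_one.mp h0
    have h00 : (0 : ZMod d) ∈ colA d g 0 := by
      have hne00 : Af d g ((0 : ZMod d), (0 : ZMod d)) ≠ 0 := by rw [Af00 g hg]; norm_num
      unfold colA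
      simp only [Finset.mem_filter, Finset.mem_univ, true_and]
      exact hne00
    have hk0 : k₀ = 0 := by
      rw [hk₀] at h00
      exact (Finset.mem_singleton.mp h00).symm
    have hone0 : ∀ k : ZMod d, k ≠ 0 → Af d g (k, 0) = 0 := by
      intro k hk
      by_contra h
      have hmem : k ∈ colA d g 0 := by simp [colA, h]
      rw [hk₀, hk0] at hmem
      exact hk (Finset.mem_singleton.mp hmem)
    have hd : (d : ℂ) ≠ 0 := Nat.cast_ne_zero.mpr (NeZero.ne d)
    have huval : ∀ n, g n * (starRingEnd ℂ) (g n) = 1 / d := by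
      intro n
      have h := inv_sum_single g 0 0 hone0 n
      rw [sub_zero, zero_mul, ee_zero, one_mul, Af00 g hg] at h
      rw [eq_div_iff hd]
      linear_combination h
    have hge3 : ∀ ℓ : ZMod d, ℓ ≠ 0 → 3 ≤ (colA d g ℓ).card := by
      intro ℓ hℓ
      rcases Nat.lt_or_ge (colA d g ℓ).card 3 with h | h
      · exfalso
        have h2 : (colA d g ℓ).card = 2 := by
          have := hge2 ℓ hℓ
          omega
        obtain ⟨k₁, k₂, hne, hset⟩ := Finset.card_eq_two.mp h2
        have hm1 : Af d g (k₁, ℓ) ≠ 0 := by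
          have : k₁ ∈ colA d g ℓ := by rw [hset]; simp
          simpa [colA] using this
        have hm2 : Af d g (k₂, ℓ) ≠ 0 := by
          have : k₂ ∈ colA d g ℓ := by rw [hset]; simp
          simpa [colA] using this
        refine no_two hp hodd g huval ℓ k₁ k₂ hne hm1 hm2 ?_
        intro k hk1 hk2
        by_contra h
        have hmem : k ∈ colA d g ℓ := by simp [colA, h]
        rw [hset] at hmem
        rcases Finset.mem_insert.mp hmem with h' | h'
        · exact hk1 h'
        · exact hk2 (Finset.mem_singleton.mp h')
      · exact h
    have hsum : ∑ ℓ : ZMod d, (colA d g ℓ).card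
        = (colA d g 0).card + ∑ ℓ ∈ Finset.univ.erase 0, (colA d g ℓ).card :=
      (Finset.add_sum_erase Finset.univ _ (Finset.mem_univ 0)).symm
    have hbound := Finset.card_nsmul_le_sum (Finset.univ.erase (0 : ZMod d))
      (fun ℓ => (colA d g ℓ).card) 3 (fun ℓ hℓ => hge3 ℓ (Finset.ne_of_mem_erase hℓ))
    have hcard_erase : (Finset.univ.erase (0 : ZMod d)).card = d - 1 := by
      rw [Finset.card_erase_of_mem (Finset.mem_univ 0), Finset.card_univ, ZMod.card]
    rw [hcard_erase, smul_eq_mul] at hbound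
    rw [hsum, h0]
    omega
  · have h0ge : 2 ≤ (colA d g 0).card := by
      have := hpos 0
      omega
    have hball : ∀ ℓ ∈ (Finset.univ : Finset (ZMod d)), 2 ≤ (colA d g ℓ).card := by
      intro ℓ _
      by_cases hℓ : ℓ = 0
      · subst hℓ; exact h0ge
      · exact hge2 ℓ hℓ
    have hbound := Finset.card_nsmul_le_sum Finset.univ
      (fun ℓ => (colA d g ℓ).card) 2 hball
    rw [Finset.card_univ, ZMod.card, smul_eq_mul] at hbound
    omega
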